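/- Two-dimensional prefixes are pairs of lists, with fully specified items being pairs of lists of fixed lengths L₁ and L₂. Let f be a finitely supported ℕ-valued weight function on such pairs, let P be a finite set of prefix pairs, let q be a prefix pair, and let G = G(q|P). Then C_{q|P} ≤ f_q − ∑_{g ∈ G} f_g + ∑_{{g, g'} ⊆ G, g ≠ g'} f_{glb(g, g')}, where the last sum is over unordered pairs of distinct elements of G. (This is the deterministic core of the paper's two-dimensional coverage analysis: the inclusion–exclusion expression computed by the two-dimensional calcPred is a conservative, i.e. never-underestimating, bound on the conditioned frequency C_{q|P}; it follows from the Bonferroni inequality |⋃_{g∈G} H_g| ≥ ∑_g |H_g| − ∑_{g≠g'} |H_g ∩ H_{g'}| together with H_g ⊆ H_q ∩ H_P and H_g ∩ H_{g'} = H_{glb(g,g')}.) -/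

import Mathlib

/-- The set of fully specified items (pairs of lists of lengths `L₁`, `L₂`) generalized
by the two-dimensional prefix pair `p`. -/
def Hset2 {α β : Type*} (L₁ L₂ : ℕ) (p : List α × List β) : Set (List α × List β) :=
  {e | e.1.length = L₁ ∧ e.2.length = L₂ ∧ p.1 <+: e.1 ∧ p.2 <+: e.2}

/-- The set of fully specified items generalized by some prefix pair in `P`. -/
def Hset2P {α β : Type*} (L₁ L₂ : ℕ) (P : Finset (List α × List β)) :
    Set (List α × List β) :=
  ⋃ p ∈ P, Hset2 L₁ L₂ p

/-- The frequency of a prefix pair `p`: the total weight of items it generalizes. -/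
noncomputable def freq2 {α β : Type*} (L₁ L₂ : ℕ) (f : List α × List β → ℕ)
    (p : List α × List β) : ℕ :=
  ∑ᶠ e ∈ Hset2 L₁ L₂ p, f e

/-- The conditioned frequency `C_{q|P}`: the total weight of items generalized by `q`
but by no prefix pair of `P`. -/
noncomputable def condFreq2 {α β : Type*} (L₁ L₂ : ℕ) (f : List α × List β → ℕ)
    (q : List α × List β) (P : Finset (List α × List β)) : ℕ :=
  ∑ᶠ e ∈ Hset2 L₁ L₂ q \ Hset2P L₁ L₂ P, f e

/-- `p ⪯ p'`: the prefix pair `p` generalizes `p'` coordinatewise. -/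
def gen2 {α β : Type*} (p p' : List α × List β) : Prop :=
  p.1 <+: p'.1 ∧ p.2 <+: p'.2

/-- `G(q|P)`: the prefix pairs of `P` most closely generalized by `q`, i.e. the `h ∈ P`
with `q ≺ h` and no `h' ∈ P` with `q ≺ h' ≺ h`. -/
noncomputable def Gset2 {α β : Type*} (q : List α × List β)
    (P : Finset (List α × List β)) : Finset (List α × List β) :=
  @Finset.filter _
    (fun h => (gen2 q h ∧ q ≠ h) ∧
      ¬∃ h' ∈ P, (gen2 q h' ∧ q ≠ h') ∧ (gen2 h' h ∧ h' ≠ h))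
    (Classical.decPred _) P

/-- Two lists are comparable when one is a list-prefix of the other. -/
def Comparable {γ : Type*} (a b : List γ) : Prop := a <+: b ∨ b <+: a

/-- The longer of two lists (used to form the greatest lower bound coordinatewise). -/
def longer {γ : Type*} (a b : List γ) : List γ :=
  if a.length ≤ b.length then b else a

/-- The frequency of the greatest lower bound `glb(h, h')`: when both coordinates are
comparable, `glb(h, h')` is the pair of the longer coordinates; otherwise `glb(h, h')`
generalizes nothing and has frequency `0`. -/
noncomputable def glbFreq {α β : Type*} (L₁ L₂ : ℕ) (f : List α × List β → ℕ)
    (h h' : List α × List β) : ℕ :=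
  @ite _ (Comparable h.1 h'.1 ∧ Comparable h.2 h'.2) (Classical.dec _)
    (freq2 L₁ L₂ f (longer h.1 h'.1, longer h.2 h'.2)) 0

theorem longer_comm {γ : Type*} {a b : List γ} (hab : Comparable a b) :
    longer a b = longer b a := by
  unfold longer
  rcases Nat.lt_trichotomy a.length b.length with hlt | heq | hgt
  · rw [if_pos hlt.le, if_neg (not_le.mpr hlt)]
  · have hab' : a = b := by
      rcases hab with hp | hp
      · exact hp.eq_of_length heq
      · exact (hp.eq_of_length heq.symm).symm
    subst hab'; rfl
  · rw [if_neg (not_le.mpr hgt), if_pos hgt.le]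

theorem glbFreq_comm {α β : Type*} (L₁ L₂ : ℕ) (f : List α × List β → ℕ)
    (h h' : List α × List β) : glbFreq L₁ L₂ f h h' = glbFreq L₁ L₂ f h' h := by
  unfold glbFreq
  by_cases hc : Comparable h.1 h'.1 ∧ Comparable h.2 h'.2
  · have hc' : Comparable h'.1 h.1 ∧ Comparable h'.2 h.2 := ⟨Or.symm hc.1, Or.symm hc.2⟩
    rw [if_pos hc, if_pos hc', longer_comm hc.1, longer_comm hc.2]
  · have hc' : ¬(Comparable h'.1 h.1 ∧ Comparable h'.2 h.2) := fun hcon =>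
      hc ⟨Or.symm hcon.1, Or.symm hcon.2⟩
    rw [if_neg hc, if_neg hc']

theorem prefix_comparable' {γ : Type*} {a b c : List γ} (h1 : a <+: c) (h2 : b <+: c) :
    Comparable a b := by
  rcases le_total a.length b.length with h | h
  · exact Or.inl (List.prefix_of_prefix_length_le h1 h2 h)
  · exact Or.inr (List.prefix_of_prefix_length_le h2 h1 h)

theorem longer_prefix_iff {γ : Type*} {a b x : List γ} (hab : Comparable a b) :
    longer a b <+: x ↔ a <+: x ∧ b <+: x := by
  unfold longer
  rcases hab with h | h
  · rw [if_pos h.length_le]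
    exact ⟨fun hx => ⟨h.trans hx, hx⟩, fun hx => hx.2⟩
  · by_cases hl : a.length ≤ b.length
    · have hba : b = a := h.eq_of_length (le_antisymm h.length_le hl)
      subst hba
      rw [if_pos le_rfl]
      exact ⟨fun hx => ⟨hx, hx⟩, fun hx => hx.1⟩
    · rw [if_neg hl]
      exact ⟨fun hx => ⟨hx, h.trans hx⟩, fun hx => hx.1⟩

theorem Hset2_glb {α β : Type*} (L₁ L₂ : ℕ) (h h' : List α × List β)
    (hc : Comparable h.1 h'.1 ∧ Comparable h.2 h'.2) :
    Hset2 L₁ L₂ (longer h.1 h'.1, longer h.2 h'.2) = Hset2 L₁ L₂ h ∩ Hset2 L₁ L₂ h' := by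
  ext e
  simp only [Hset2, Set.mem_setOf_eq, Set.mem_inter_iff,
    longer_prefix_iff hc.1, longer_prefix_iff hc.2]
  tauto

theorem sum_sym2_classical {ι M : Type*} [LinearOrder ι] [AddCommMonoid M]
    (s : Finset ι) (p : Sym2 ι → M) :
    ∑ i ∈ @Finset.filter _ (fun i => ¬ i.IsDiag) (Classical.decPred _) s.sym2, p i
      = ∑ i ∈ @Finset.filter _ (fun i => i.1 < i.2) (Classical.decPred _)
          (@Finset.offDiag _ s),
          p s(i.1, i.2) := by
  have h := Finset.sum_sym2_filter_not_isDiag s p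
  refine Eq.trans ?_ (h.trans ?_)
  · exact Finset.sum_congr (by congr!) fun _ _ => rfl
  · exact Finset.sum_congr (by congr!) fun _ _ => rfl

/-- **Two-dimensional conservative conditioned-frequency bound.** The inclusion–exclusion
expression of the two-dimensional `calcPred` never underestimates `C_{q|P}`:
`C_{q|P} ≤ f_q − ∑_{g ∈ G} f_g + ∑_{{g,g'} ⊆ G, g ≠ g'} f_{glb(g,g')}`, where the last sum
ranges over unordered pairs of distinct elements of `G = G(q|P)`. -/
theorem condFreq2_le_inclusion_exclusion {α β : Type*} (L₁ L₂ : ℕ)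
    (f : List α × List β → ℕ) (hf : (Function.support f).Finite)
    (P : Finset (List α × List β)) (q : List α × List β) :
    (condFreq2 L₁ L₂ f q P : ℤ) ≤ (freq2 L₁ L₂ f q : ℤ)
      - ∑ g ∈ Gset2 q P, (freq2 L₁ L₂ f g : ℤ)
      + ∑ s ∈ @Finset.filter _ (fun s => ¬ s.IsDiag) (Classical.decPred _)
          (Gset2 q P).sym2,
          Sym2.lift ⟨fun g g' => (glbFreq L₁ L₂ f g g' : ℤ),
            fun g g' => by simp only []; exact_mod_cast glbFreq_comm L₁ L₂ f g g'⟩ s := by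
  classical
  letI : LinearOrder (List α × List β) := IsWellOrder.linearOrder WellOrderingRel
  set S := hf.toFinset with hSdef
  set G := Gset2 q P with hGdef
  set σ : Set (List α × List β) → ℤ :=
    fun A => ∑ e ∈ S, if e ∈ A then (f e : ℤ) else 0 with hσdef
  have hσ : ∀ A : Set (List α × List β), ((∑ᶠ e ∈ A, f e : ℕ) : ℤ) = σ A := by
    intro A
    rw [finsum_mem_eq_sum_filter f A hf, Finset.sum_filter]
    push_cast
    rfl
  have hcond : (condFreq2 L₁ L₂ f q P : ℤ) = σ (Hset2 L₁ L₂ q \ Hset2P L₁ L₂ P) := hσ _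
  have hfreq : ∀ p : List α × List β, (freq2 L₁ L₂ f p : ℤ) = σ (Hset2 L₁ L₂ p) :=
    fun p => hσ _
  have hglb : ∀ g g' : List α × List β,
      (glbFreq L₁ L₂ f g g' : ℤ) = σ (Hset2 L₁ L₂ g ∩ Hset2 L₁ L₂ g') := by
    intro g g'
    unfold glbFreq
    split_ifs with hc
    · rw [hfreq, Hset2_glb L₁ L₂ g g' hc]
    · have hempty : Hset2 L₁ L₂ g ∩ Hset2 L₁ L₂ g' = ∅ := by
        ext e
        simp only [Set.mem_inter_iff, Set.mem_empty_iff_false, iff_false, not_and]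
        rintro ⟨_, _, h1, h2⟩ ⟨_, _, h1', h2'⟩
        exact hc ⟨prefix_comparable' h1 h1', prefix_comparable' h2 h2'⟩
      rw [hempty]
      simp [hσdef]
  rw [hcond, hfreq]
  simp only [hfreq]
  rw [sum_sym2_classical]
  simp only [Sym2.lift_mk, hglb]
  have hdouble : 2 * ∑ i ∈ @Finset.filter _ (fun i => i.1 < i.2) (Classical.decPred _)
          (@Finset.offDiag _ G),
          σ (Hset2 L₁ L₂ i.1 ∩ Hset2 L₁ L₂ i.2)
      = ∑ i ∈ @Finset.offDiag _ G,
          σ (Hset2 L₁ L₂ i.1 ∩ Hset2 L₁ L₂ i.2) := by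
    rw [two_mul, ← Finset.sum_filter_add_sum_filter_not
      (@Finset.offDiag _ G) (fun i => i.1 < i.2)]
    refine congrArg₂ (· + ·) ?_ ?_
    · refine Finset.sum_congr ?_ fun _ _ => rfl
      congr!
    · refine Finset.sum_equiv (Equiv.prodComm _ _) ?_ ?_
      · intro i
        simp only [Finset.mem_filter, Finset.mem_offDiag, Equiv.prodComm_apply,
          Prod.fst_swap, Prod.snd_swap]
        constructor
        · rintro ⟨⟨h1, h2, h3⟩, h4⟩
          exact ⟨⟨h2, h1, Ne.symm h3⟩, not_lt.mpr h4.le⟩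
        · rintro ⟨⟨h1, h2, h3⟩, h4⟩
          exact ⟨⟨h2, h1, Ne.symm h3⟩, lt_of_le_of_ne (not_lt.mp h4) (Ne.symm h3)⟩
      · intro i _
        simp only [Equiv.prodComm_apply, Prod.fst_swap, Prod.snd_swap]
        rw [Set.inter_comm]
  have key : 2 * σ (Hset2 L₁ L₂ q \ Hset2P L₁ L₂ P)
      ≤ 2 * σ (Hset2 L₁ L₂ q) - 2 * ∑ g ∈ G, σ (Hset2 L₁ L₂ g)
        + ∑ i ∈ @Finset.offDiag _ G,
            σ (Hset2 L₁ L₂ i.1 ∩ Hset2 L₁ L₂ i.2) := by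
    have hsum1 : ∑ g ∈ G, σ (Hset2 L₁ L₂ g)
        = ∑ e ∈ S, ((G.filter (fun g => e ∈ Hset2 L₁ L₂ g)).card : ℤ) * (f e : ℤ) := by
      simp only [hσdef]
      rw [Finset.sum_comm]
      refine Finset.sum_congr rfl fun e _ => ?_
      simp only [Finset.sum_ite, Finset.sum_const_zero, add_zero, Finset.sum_const,
        nsmul_eq_mul]
    have hsum2 : ∑ i ∈ @Finset.offDiag _ G,
          σ (Hset2 L₁ L₂ i.1 ∩ Hset2 L₁ L₂ i.2)
        = ∑ e ∈ S, (((G.filter (fun g => e ∈ Hset2 L₁ L₂ g)).offDiag.card : ℤ))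
            * (f e : ℤ) := by
      simp only [hσdef]
      rw [Finset.sum_comm]
      refine Finset.sum_congr rfl fun e _ => ?_
      have hfe : (@Finset.offDiag _ G).filter
            (fun i => e ∈ Hset2 L₁ L₂ i.1 ∧ e ∈ Hset2 L₁ L₂ i.2)
          = (G.filter (fun g => e ∈ Hset2 L₁ L₂ g)).offDiag := by
        ext i
        simp only [Finset.mem_filter, Finset.mem_offDiag]
        tauto
      simp only [Set.mem_inter_iff, Finset.sum_ite, Finset.sum_const_zero, add_zero,
        Finset.sum_const, nsmul_eq_mul]
      rw [hfe]
    rw [hsum1, hsum2]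
    simp only [hσdef]
    rw [Finset.mul_sum, Finset.mul_sum, Finset.mul_sum, ← Finset.sum_sub_distrib,
      ← Finset.sum_add_distrib]
    apply Finset.sum_le_sum
    intro e _
    have hc0 : (0:ℤ) ≤ (f e : ℤ) := Int.natCast_nonneg _
    by_cases hpos : 0 < (G.filter (fun g => e ∈ Hset2 L₁ L₂ g)).card
    · obtain ⟨g, hg⟩ := Finset.card_pos.mp hpos
      rw [Finset.mem_filter] at hg
      obtain ⟨hgG, hgH⟩ := hg
      rw [hGdef] at hgG
      simp only [Gset2, Finset.mem_filter] at hgG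
      have hgP : g ∈ P := hgG.1
      have hq2g : gen2 q g := hgG.2.1.1
      obtain ⟨he1, he2, hp1, hp2⟩ := hgH
      have heq : e ∈ Hset2 L₁ L₂ q := ⟨he1, he2, hq2g.1.trans hp1, hq2g.2.trans hp2⟩
      have heP : e ∈ Hset2P L₁ L₂ P := Set.mem_biUnion hgP ⟨he1, he2, hp1, hp2⟩
      rw [if_pos heq, if_neg (fun h => h.2 heP)]
      obtain ⟨k, hk⟩ : ∃ k, (G.filter (fun g => e ∈ Hset2 L₁ L₂ g)).card = k := ⟨_, rfl⟩
      rw [Finset.offDiag_card, hk]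
      rw [hk] at hpos
      have hkk : ((k * k - k : ℕ) : ℤ) = (k:ℤ) * (k:ℤ) - (k:ℤ) := by
        have hle : k ≤ k * k := Nat.le_mul_of_pos_left k hpos
        push_cast [hle]
        ring
      rw [hkk]
      have hfact : 0 ≤ ((k:ℤ) - 1) * ((k:ℤ) - 2) := by
        rcases k with _ | _ | n
        · norm_num
        · norm_num
        · have hn : (0:ℤ) ≤ (n:ℤ) := Int.natCast_nonneg n
          push_cast
          nlinarith
      nlinarith [mul_nonneg hfact hc0]
    · have h0 : (G.filter (fun g => e ∈ Hset2 L₁ L₂ g)) = ∅ :=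
        Finset.card_eq_zero.mp (Nat.eq_zero_of_not_pos hpos)
      rw [h0]
      simp only [Finset.card_empty, Finset.offDiag_empty, Nat.cast_zero, zero_mul,
        mul_zero, sub_zero, add_zero]
      split_ifs with h1 h2
      · exact le_refl _
      · exact absurd h1.1 h2
      · linarith
      · exact le_refl _
  linarith [hdouble, key]
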